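/- Let d : ℝ → ℝ be an additive function and let α, β ∈ ℝ satisfy either 0 < 2α < β or α < 2β < 0. If d(coth(x)) = -(1/sinh²(x))·d(x) holds for all x ∈ (α, β), then d is a standard derivation. -/

import Mathlib

theorem stmt_12 (d : ℝ → ℝ) (hd : ∀ x y : ℝ, d (x + y) = d x + d y)
    (α β : ℝ) (hαβ : (0 < 2 * α ∧ 2 * α < β) ∨ (α < 2 * β ∧ 2 * β < 0))
    (h : ∀ x ∈ Set.Ioo α β,
      d (Real.cosh x / Real.sinh x) = -(1 / (Real.sinh x) ^ 2) * d x) :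
    ∀ x y : ℝ, d (x * y) = d x * y + x * d y := by
  have hd0 : d 0 = 0 := by have := hd 0 0; simp at this; linarith
  have dq : ∀ (q : ℚ) (x : ℝ), d ((q : ℝ) * x) = (q : ℝ) * d x := by
    intro q x
    have := map_ratCast_smul (AddMonoidHom.mk' d hd) ℝ ℝ q x
    simpa [smul_eq_mul] using this
  have dhalf : ∀ z : ℝ, d (z / 2) = d z / 2 := by
    intro z
    have h' := hd (z/2) (z/2)
    rw [add_halves] at h'
    linarith
  have dtwo : ∀ z : ℝ, d (2 * z) = 2 * d z := by
    intro z; have h' := hd z z; rw [← two_mul] at h'; linarith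
  have dsub : ∀ a b : ℝ, d (a - b) = d a - d b := by
    intro a b; have h' := hd (a - b) b; rw [sub_add_cancel] at h'; linarith
  -- key pointwise relation
  have key : ∀ x : ℝ, x ≠ 0 → x ∈ Set.Ioo α β → 2*x ∈ Set.Ioo α β →
      d (1/(Real.cosh x / Real.sinh x))
        = -(1/(Real.cosh x / Real.sinh x)^2) * d (Real.cosh x / Real.sinh x) := by
    intro x hx0 hx h2x
    have hs : Real.sinh x ≠ 0 := fun hh => hx0 (Real.sinh_eq_zero.mp hh)
    have hc : Real.cosh x ≠ 0 := ne_of_gt (Real.cosh_pos x)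
    have hpy : Real.cosh x ^ 2 - Real.sinh x ^ 2 = 1 := Real.cosh_sq_sub_sinh_sq x
    have h1 := h x hx
    have h2 := h (2*x) h2x
    rw [Real.cosh_two_mul, Real.sinh_two_mul, dtwo] at h2
    have e : (Real.cosh x ^2 + Real.sinh x^2) / (2*Real.sinh x*Real.cosh x)
        = (Real.cosh x/Real.sinh x + 1/(Real.cosh x/Real.sinh x))/2 := by
      field_simp
    rw [e, dhalf, hd, h1] at h2
    rw [h1, one_div_div]
    field_simp at h2
    have hG4 : (d (Real.sinh x / Real.cosh x) * Real.cosh x ^ 2) * Real.sinh x ^ 4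
        = d x * Real.sinh x ^ 4 := by
      linear_combination Real.sinh x ^ 2 * h2 + d x * Real.sinh x ^ 2 * hpy
    have hG : d (Real.sinh x / Real.cosh x) * Real.cosh x ^ 2 = d x :=
      mul_right_cancel₀ (pow_ne_zero 4 hs) hG4
    have hG' : d (Real.sinh x / Real.cosh x) = d x / Real.cosh x ^ 2 :=
      (eq_div_iff (pow_ne_zero 2 hc)).mpr hG
    rw [hG']
    field_simp
  -- strict decrease of coth
  have hlt : ∀ a b : ℝ, 0 < Real.sinh a * Real.sinh b → a < b →
      Real.cosh b / Real.sinh b < Real.cosh a / Real.sinh a := by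
    intro a b hprod hab
    have hsa : Real.sinh a ≠ 0 := by intro hh; rw [hh] at hprod; simp at hprod
    have hsb : Real.sinh b ≠ 0 := by intro hh; rw [hh] at hprod; simp at hprod
    have e : Real.cosh a / Real.sinh a - Real.cosh b / Real.sinh b
        = Real.sinh (b - a) / (Real.sinh a * Real.sinh b) := by
      rw [Real.sinh_sub]; field_simp
    have hpos : 0 < Real.sinh (b - a) := Real.sinh_pos_iff.mpr (by linarith)
    have := div_pos hpos hprod
    linarith [e ▸ this]
  -- interval setup
  obtain ⟨a, b, hab, hsgn, hmem⟩ : ∃ a b : ℝ, a < b ∧ (0 < a ∨ b < 0) ∧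
      ∀ x ∈ Set.Icc a b, x ≠ 0 ∧ x ∈ Set.Ioo α β ∧ 2*x ∈ Set.Ioo α β := by
    rcases hαβ with ⟨h1, h2⟩ | ⟨h1, h2⟩
    · refine ⟨α + (β/2-α)/3, α + 2*(β/2-α)/3, by linarith, Or.inl (by linarith), ?_⟩
      rintro x ⟨hx1, hx2⟩
      refine ⟨by intro hh; rw [hh] at hx1; linarith, ⟨by linarith, by linarith⟩,
        ⟨by linarith, by linarith⟩⟩
    · refine ⟨α/2 + (β-α/2)/3, α/2 + 2*(β-α/2)/3, by linarith, Or.inr (by linarith), ?_⟩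
      rintro x ⟨hx1, hx2⟩
      refine ⟨by intro hh; rw [hh] at hx2; linarith, ⟨by linarith, by linarith⟩,
        ⟨by linarith, by linarith⟩⟩
  -- relation on an interval of coth-values
  have hcont : ContinuousOn (fun x => Real.cosh x / Real.sinh x) (Set.Icc a b) :=
    Real.continuous_cosh.continuousOn.div Real.continuous_sinh.continuousOn
      (fun x hx hh => (hmem x hx).1 (Real.sinh_eq_zero.mp hh))
  have relJ : ∀ u ∈ Set.Icc (Real.cosh b / Real.sinh b) (Real.cosh a / Real.sinh a),
      d (1/u) = -(1/u^2) * d u := by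
    intro u hu
    obtain ⟨x, hxm, hfx⟩ := intermediate_value_Icc' hab.le hcont hu
    obtain ⟨hx0, hx1, hx2⟩ := hmem x hxm
    rw [← hfx]
    exact key x hx0 hx1 hx2
  have hABlt : Real.cosh b / Real.sinh b < Real.cosh a / Real.sinh a := by
    refine hlt a b ?_ hab
    rcases hsgn with hpos | hneg
    · exact mul_pos (Real.sinh_pos_iff.mpr hpos)
        (Real.sinh_pos_iff.mpr (lt_trans hpos hab))
    · exact mul_pos_of_neg_of_neg (Real.sinh_neg_iff.mpr (lt_trans hab hneg))
        (Real.sinh_neg_iff.mpr hneg)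
  -- rational scaling of the relation
  have relscale : ∀ u : ℝ, u ≠ 0 → d (1/u) = -(1/u^2) * d u → ∀ q : ℚ, (q:ℝ) ≠ 0 →
      d (1/((q:ℝ)*u)) = -(1/((q:ℝ)*u)^2) * d ((q:ℝ)*u) := by
    intro u hu hr q hq
    have e : 1/((q:ℝ)*u) = ((q⁻¹:ℚ):ℝ) * (1/u) := by push_cast; field_simp
    rw [e, dq, dq, hr]
    push_cast
    field_simp
  -- relation on an interval with positive endpoints
  obtain ⟨A, B, hA, hAB, relP⟩ : ∃ A B : ℝ, 0 < A ∧ A < B ∧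
      ∀ u ∈ Set.Icc A B, d (1/u) = -(1/u^2) * d u := by
    rcases hsgn with hpos | hneg
    · refine ⟨Real.cosh b / Real.sinh b, Real.cosh a / Real.sinh a, ?_, hABlt, relJ⟩
      exact div_pos (Real.cosh_pos b) (Real.sinh_pos_iff.mpr (lt_trans hpos hab))
    · have hBneg : Real.cosh a / Real.sinh a < 0 :=
        div_neg_of_pos_of_neg (Real.cosh_pos a) (Real.sinh_neg_iff.mpr (lt_trans hab hneg))
      refine ⟨-(Real.cosh a / Real.sinh a), -(Real.cosh b / Real.sinh b),
        by linarith, by linarith, ?_⟩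
      intro u hu
      obtain ⟨hu1, hu2⟩ := hu
      have hmu : -u ∈ Set.Icc (Real.cosh b / Real.sinh b) (Real.cosh a / Real.sinh a) :=
        ⟨by linarith, by linarith⟩
      have hmu0 : -u ≠ 0 := by intro hh; rw [hh] at hmu; exact absurd hmu.2 (not_le.mpr hBneg)
      have := relscale (-u) hmu0 (relJ (-u) hmu) (-1) (by norm_num)
      have e' : ((-1:ℚ):ℝ) * (-u) = u := by push_cast; ring
      rwa [e'] at this
  -- relation for all positive reals
  have relpos : ∀ s : ℝ, 0 < s → d (1/s) = -(1/s^2) * d s := by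
    intro s hs
    obtain ⟨q, hq1, hq2⟩ := exists_rat_btwn (show s/B < s/A by
      apply div_lt_div_of_pos_left hs hA hAB)
    have hq0 : (0:ℝ) < q := lt_trans (div_pos hs (lt_trans hA hAB)) hq1
    have hmem1 : A ≤ s/(q:ℝ) := by
      rw [le_div_iff₀ hq0]
      have := (lt_div_iff₀ hA).mp hq2
      linarith
    have hmem2 : s/(q:ℝ) ≤ B := by
      rw [div_le_iff₀ hq0]
      have := (div_lt_iff₀ (lt_trans hA hAB)).mp hq1
      linarith
    have hu0 : s/(q:ℝ) ≠ 0 := ne_of_gt (div_pos hs hq0)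
    have := relscale (s/(q:ℝ)) hu0 (relP _ ⟨hmem1, hmem2⟩) q (ne_of_gt hq0)
    rwa [mul_div_cancel₀ s (ne_of_gt hq0)] at this
  have relall : ∀ s : ℝ, s ≠ 0 → d (1/s) = -(1/s^2) * d s := by
    intro s hs
    rcases lt_or_gt_of_ne hs with hneg | hpos
    · have h' := relpos (-s) (by linarith)
      have := relscale (-s) (by linarith) h' (-1) (by norm_num)
      have e' : ((-1:ℚ):ℝ) * (-s) = s := by push_cast; ring
      rwa [e'] at this
    · exact relpos s hpos
  have d1 : d 1 = 0 := by
    have := relall 1 one_ne_zero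
    norm_num at this
    linarith
  have dsq : ∀ x : ℝ, d (x^2) = 2*x*d x := by
    intro x
    rcases eq_or_ne x 0 with rfl | hx0
    · simpa using hd0
    rcases eq_or_ne x 1 with rfl | hx1
    · rw [one_pow, d1]; ring
    have hx1' : x - 1 ≠ 0 := sub_ne_zero.mpr hx1
    have hxx : x^2 - x ≠ 0 := by
      have : x * (x - 1) ≠ 0 := mul_ne_zero hx0 hx1'
      intro hh; apply this; nlinarith [hh]
    have r1 := relall x hx0
    have r2 := relall (x-1) hx1'
    have r3 := relall (x^2-x) hxx
    have e1 : d (x-1) = d x := by rw [dsub, d1]; ring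
    have e2 : d (x^2 - x) = d (x^2) - d x := dsub _ _
    have e3 : (1:ℝ)/(x-1) - 1/x = 1/(x^2-x) := by field_simp; ring
    have e4 : d (1/(x-1)) - d (1/x) = d (1/(x^2-x)) := by rw [← dsub, e3]
    rw [r1, r2, r3, e1, e2] at e4
    field_simp at e4
    have hne : x^2*(x-1)^2 ≠ 0 := mul_ne_zero (pow_ne_zero _ hx0) (pow_ne_zero _ hx1')
    have h5 : (d (x^2) - 2*x*d x) * (x^2*(x-1)^2) = 0 := by linear_combination x^2*(x-1)^2 * e4
    have h6 := (mul_eq_zero.mp h5).resolve_right hne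
    linarith
  intro x y
  have q1 := dsq (x+y)
  have q2 := dsq x
  have q3 := dsq y
  have e : (x+y)^2 = x^2 + (x*y + x*y) + y^2 := by ring
  rw [e, hd, hd, hd] at q1
  linear_combination q1/2 - q2/2 - q3/2 + (x + y) * hd x y
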